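/- Define the single-site Gibbs-sampling kernel at index i, which maps a {0,1}-valued configuration s to the random configuration that agrees with s at every j ≠ i and whose value at i is 1 with probability σ(b i + ∑_{j ≠ i} w i j * s j) and 0 otherwise. Then the Boltzmann distribution on configurations is invariant under this kernel: binding the Boltzmann probability mass function with the kernel returns the Boltzmann probability mass function. -/

import Mathlib

open Finset in
private lemma ediff_aux {N : Type*} [Fintype N] [DecidableEq N]
    (w : N → N → ℝ) (b : N → ℝ)
    (hsym : ∀ i j, w i j = w j i) (hdiag : ∀ i, w i i = 0)
    (E : (N → Bool) → ℝ)
    (hE : ∀ s, E s = -(∑ i, b i * (if s i then (1 : ℝ) else 0)) -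
      (1 / 2) * ∑ i, ∑ j, w i j * (if s i then (1 : ℝ) else 0) *
        (if s j then (1 : ℝ) else 0))
    (i : N) (t : N → Bool) :
    E (Function.update t i false) - E (Function.update t i true)
      = b i + ∑ j ∈ univ.erase i, w i j * (if t j then (1:ℝ) else 0) := by
  have e0 : ∀ j, (if Function.update t i false j then (1:ℝ) else 0)
      = if j = i then 0 else if t j then 1 else 0 := by
    intro j
    rcases eq_or_ne j i with rfl | hj
    · simp
    · simp [Function.update_of_ne hj, hj]
  have e1 : ∀ j, (if Function.update t i true j then (1:ℝ) else 0)
      = if j = i then 1 else if t j then 1 else 0 := by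
    intro j
    rcases eq_or_ne j i with rfl | hj
    · simp
    · simp [Function.update_of_ne hj, hj]
  rw [hE, hE]
  simp only [e0, e1]
  have split1 : ∀ v : ℝ,
      (∑ j, b j * (if j = i then v else if t j then (1:ℝ) else 0))
      = b i * v + ∑ j ∈ univ.erase i, b j * (if t j then (1:ℝ) else 0) := by
    intro v
    rw [← Finset.sum_erase_add _ _ (Finset.mem_univ i)]
    rw [add_comm]
    congr 1
    · simp
    · apply Finset.sum_congr rfl
      intro j hj
      rw [if_neg (Finset.ne_of_mem_erase hj)]
  have split2 : ∀ v : ℝ,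
      (∑ j, ∑ k, w j k * (if j = i then v else if t j then (1:ℝ) else 0)
        * (if k = i then v else if t k then (1:ℝ) else 0))
      = (∑ j ∈ univ.erase i, ∑ k ∈ univ.erase i,
          w j k * (if t j then (1:ℝ) else 0) * (if t k then (1:ℝ) else 0))
        + v * (∑ j ∈ univ.erase i, w j i * (if t j then (1:ℝ) else 0))
        + v * (∑ k ∈ univ.erase i, w i k * (if t k then (1:ℝ) else 0))
        + w i i * v * v := by
    intro v
    rw [← Finset.sum_erase_add _ _ (Finset.mem_univ i)]
    have inner_i : (∑ k, w i k * (if (i:N) = i then v else if t i then (1:ℝ) else 0)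
        * (if k = i then v else if t k then (1:ℝ) else 0))
        = v * (∑ k ∈ univ.erase i, w i k * (if t k then (1:ℝ) else 0)) + w i i * v * v := by
      rw [← Finset.sum_erase_add _ _ (Finset.mem_univ i)]
      simp only [eq_self_iff_true, if_true]
      rw [Finset.mul_sum]
      congr 1
      apply Finset.sum_congr rfl
      intro k hk
      rw [if_neg (Finset.ne_of_mem_erase hk)]; ring
    have inner_ne : ∀ j ∈ univ.erase i,
        (∑ k, w j k * (if j = i then v else if t j then (1:ℝ) else 0)
          * (if k = i then v else if t k then (1:ℝ) else 0))
        = (∑ k ∈ univ.erase i, w j k * (if t j then (1:ℝ) else 0) * (if t k then (1:ℝ) else 0))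
          + w j i * (if t j then (1:ℝ) else 0) * v := by
      intro j hj
      rw [← Finset.sum_erase_add _ _ (Finset.mem_univ i)]
      rw [if_neg (Finset.ne_of_mem_erase hj)]
      simp only [eq_self_iff_true, if_true]
      congr 1
      apply Finset.sum_congr rfl
      intro k hk
      rw [if_neg (Finset.ne_of_mem_erase hk)]
    rw [Finset.sum_congr rfl inner_ne, Finset.sum_add_distrib, inner_i]
    have : (∑ j ∈ univ.erase i, w j i * (if t j then (1:ℝ) else 0) * v)
        = v * ∑ j ∈ univ.erase i, w j i * (if t j then (1:ℝ) else 0) := by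
      rw [Finset.mul_sum]; apply Finset.sum_congr rfl; intro j _; ring
    rw [this]
    ring
  rw [split1 0, split1 1, split2 0, split2 1, hdiag i]
  have hS' : (∑ j ∈ univ.erase i, w j i * (if t j then (1:ℝ) else 0))
      = ∑ j ∈ univ.erase i, w i j * (if t j then (1:ℝ) else 0) := by
    apply Finset.sum_congr rfl; intro j _; rw [hsym]
  rw [hS']
  ring

/-- The Boltzmann distribution of a Boltzmann machine is invariant under the
single-site Gibbs-sampling kernel at any index `i`: binding the Boltzmann
probability mass function with the kernel returns the Boltzmann pmf. -/
theorem boltzmann_pmf_invariant_gibbs_kernel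
    {N : Type*} [Fintype N] [DecidableEq N]
    (w : N → N → ℝ) (b : N → ℝ)
    (hsym : ∀ i j, w i j = w j i) (hdiag : ∀ i, w i i = 0)
    (E : (N → Bool) → ℝ)
    (hE : ∀ s, E s = -(∑ i, b i * (if s i then (1 : ℝ) else 0)) -
      (1 / 2) * ∑ i, ∑ j, w i j * (if s i then (1 : ℝ) else 0) *
        (if s j then (1 : ℝ) else 0))
    (σ : ℝ → ℝ) (hσ : ∀ x, σ x = 1 / (1 + Real.exp (-x)))
    (i : N)
    (π : PMF (N → Bool))
    (hπ : ∀ s, π s = ENNReal.ofReal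
      (Real.exp (-E s) / ∑ u : N → Bool, Real.exp (-E u)))
    (K : (N → Bool) → PMF (N → Bool))
    (hK : ∀ s t, K s t =
      if t = Function.update s i true then
        ENNReal.ofReal (σ (b i + ∑ j ∈ Finset.univ.erase i,
          w i j * (if s j then (1 : ℝ) else 0)))
      else if t = Function.update s i false then
        ENNReal.ofReal (1 - σ (b i + ∑ j ∈ Finset.univ.erase i,
          w i j * (if s j then (1 : ℝ) else 0)))
      else 0) :
    π.bind K = π := by
  classical
  have hZpos : (0:ℝ) < ∑ u : N → Bool, Real.exp (-E u) :=
    Finset.sum_pos (fun u _ => Real.exp_pos _) Finset.univ_nonempty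
  set Z := ∑ u : N → Bool, Real.exp (-E u) with hZ
  ext t
  rw [PMF.bind_apply, tsum_fintype]
  set s₀ := Function.update t i false with hs₀
  set s₁ := Function.update t i true with hs₁
  have hs01 : s₀ ≠ s₁ := by
    intro hcon
    have h2 := congrFun hcon i
    simp [hs₀, hs₁] at h2
  have hKzero : ∀ s, s ≠ s₀ → s ≠ s₁ → K s t = 0 := by
    intro s h0 h1
    rw [hK]
    have hgen : ∀ c : Bool, t ≠ Function.update s i c := by
      intro c hcon
      have hsrep : s = Function.update t i (s i) := by
        funext j
        rcases eq_or_ne j i with rfl | hj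
        · simp
        · rw [Function.update_of_ne hj, hcon, Function.update_of_ne hj]
      cases hsi : s i
      · exact h0 (by rw [hsrep, hsi])
      · exact h1 (by rw [hsrep, hsi])
    rw [if_neg (hgen true), if_neg (hgen false)]
  have hsum : (∑ s : N → Bool, π s * K s t) = π s₀ * K s₀ t + π s₁ * K s₁ t := by
    have hss : ∑ s ∈ ({s₀, s₁} : Finset (N → Bool)), π s * K s t
        = ∑ s : N → Bool, π s * K s t := by
      apply Finset.sum_subset (Finset.subset_univ _)
      intro s _ hs
      simp only [Finset.mem_insert, Finset.mem_singleton] at hs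
      push_neg at hs
      rw [hKzero s hs.1 hs.2, mul_zero]
    rw [← hss, Finset.sum_pair hs01]
  rw [hsum]
  set S := ∑ j ∈ Finset.univ.erase i, w i j * (if t j then (1:ℝ) else 0) with hS
  have hfield : ∀ c : Bool,
      (∑ j ∈ Finset.univ.erase i,
        w i j * (if Function.update t i c j then (1:ℝ) else 0)) = S := by
    intro c
    rw [hS]
    apply Finset.sum_congr rfl
    intro j hj
    rw [Function.update_of_ne (Finset.ne_of_mem_erase hj)]
  have hf0 : (∑ j ∈ Finset.univ.erase i,
      w i j * (if s₀ j then (1:ℝ) else 0)) = S := by rw [hs₀]; exact hfield false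
  have hf1 : (∑ j ∈ Finset.univ.erase i,
      w i j * (if s₁ j then (1:ℝ) else 0)) = S := by rw [hs₁]; exact hfield true
  set a := Real.exp (-E s₀) with ha
  set c := Real.exp (-E s₁) with hc
  have hapos : 0 < a := Real.exp_pos _
  have hcpos : 0 < c := Real.exp_pos _
  have hEd := ediff_aux w b hsym hdiag E hE i t
  rw [← hs₀, ← hs₁, ← hS] at hEd
  have hσval : σ (b i + S) = c / (a + c) := by
    rw [hσ]
    have hexp : Real.exp (-(b i + S)) = a / c := by
      rw [← hEd, ha, hc, ← Real.exp_sub]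
      congr 1
      ring
    rw [hexp]
    field_simp
    exact add_comm a c
  have h1σ : 1 - σ (b i + S) = a / (a + c) := by
    rw [hσval]
    field_simp
    ring
  have hσnonneg : 0 ≤ σ (b i + S) := by rw [hσval]; positivity
  have h1σnonneg : 0 ≤ 1 - σ (b i + S) := by rw [h1σ]; positivity
  have hZne : Z ≠ 0 := ne_of_gt hZpos
  have hacne : a + c ≠ 0 := ne_of_gt (by positivity)
  have hu0 : Function.update s₀ i true = s₁ := by
    rw [hs₀, hs₁, Function.update_idem]
  have hu1 : Function.update s₀ i false = s₀ := by
    rw [hs₀, Function.update_idem]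
  have hu2 : Function.update s₁ i true = s₁ := by
    rw [hs₁, Function.update_idem]
  have hu3 : Function.update s₁ i false = s₀ := by
    rw [hs₀, hs₁, Function.update_idem]
  cases ht : t i
  · -- t i = false, so t = s₀
    have hts : s₀ = t := by rw [hs₀, ← ht, Function.update_eq_self]
    have hK0 : K s₀ t = ENNReal.ofReal (1 - σ (b i + S)) := by
      rw [hK, hf0, hu0, hu1, if_neg, if_pos hts.symm]
      rw [← hts]
      exact hs01
    have hK1 : K s₁ t = ENNReal.ofReal (1 - σ (b i + S)) := by
      rw [hK, hf1, hu2, hu3, if_neg, if_pos hts.symm]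
      rw [← hts]
      exact hs01
    rw [hK0, hK1, hπ s₀, hπ s₁, hπ t, ← ha, ← hc, ← hts]
    rw [← ENNReal.ofReal_mul (div_nonneg hapos.le hZpos.le),
      ← ENNReal.ofReal_mul (div_nonneg hcpos.le hZpos.le),
      ← ENNReal.ofReal_add (mul_nonneg (div_nonneg hapos.le hZpos.le) h1σnonneg)
        (mul_nonneg (div_nonneg hcpos.le hZpos.le) h1σnonneg)]
    congr 1
    rw [h1σ]
    calc a / Z * (a / (a + c)) + c / Z * (a / (a + c))
        = (a / Z + c / Z) * (a / (a + c)) := by ring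
      _ = ((a + c) / Z) * (a / (a + c)) := by rw [← add_div]
      _ = ((a + c) * a) / (Z * (a + c)) := div_mul_div_comm _ _ _ _
      _ = (a * (a + c)) / (Z * (a + c)) := by rw [mul_comm (a + c) a]
      _ = a / Z := mul_div_mul_right _ _ hacne
  · -- t i = true, so t = s₁
    have hts : s₁ = t := by rw [hs₁, ← ht, Function.update_eq_self]
    have hK0 : K s₀ t = ENNReal.ofReal (σ (b i + S)) := by
      rw [hK, hf0, hu0, if_pos hts.symm]
    have hK1 : K s₁ t = ENNReal.ofReal (σ (b i + S)) := by
      rw [hK, hf1, hu2, if_pos hts.symm]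
    rw [hK0, hK1, hπ s₀, hπ s₁, hπ t, ← ha, ← hc, ← hts]
    rw [← ENNReal.ofReal_mul (div_nonneg hapos.le hZpos.le),
      ← ENNReal.ofReal_mul (div_nonneg hcpos.le hZpos.le),
      ← ENNReal.ofReal_add (mul_nonneg (div_nonneg hapos.le hZpos.le) hσnonneg)
        (mul_nonneg (div_nonneg hcpos.le hZpos.le) hσnonneg)]
    congr 1
    rw [hσval]
    calc a / Z * (c / (a + c)) + c / Z * (c / (a + c))
        = (a / Z + c / Z) * (c / (a + c)) := by ring
      _ = ((a + c) / Z) * (c / (a + c)) := by rw [← add_div]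
      _ = ((a + c) * c) / (Z * (a + c)) := div_mul_div_comm _ _ _ _
      _ = (c * (a + c)) / (Z * (a + c)) := by rw [mul_comm (a + c) c]
      _ = c / Z := mul_div_mul_right _ _ hacne
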